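/- Every non-repetitive cell-wise zigzag filtration ∅ = K_0 ↔ ... ↔ K_m = ∅ can be transformed into an up-down filtration ∅ = L_0 ↪ ... ↪ L_n ↩ ... ↩ L_{2n} = ∅ (with m = 2n) by a finite sequence of inward diamond switches, each of which exchanges an adjacent deletion-then-addition pair of distinct cells into an addition-then-deletion pair. -/
import Mathlib

def SwitchStep {C : Type} (w w' : List (Bool × C)) : Prop :=
  ∃ (l1 l2 : List (Bool × C)) (σ τ : C), σ ≠ τ ∧
    w = l1 ++ (false, τ) :: (true, σ) :: l2 ∧
    w' = l1 ++ (true, σ) :: (false, τ) :: l2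

def ValidNonRep {C : Type} [DecidableEq C] (w : List (Bool × C)) : Prop :=
  ∀ σ : C, w.filter (fun e => decide (e.2 = σ)) = [] ∨
    w.filter (fun e => decide (e.2 = σ)) = [(true, σ), (false, σ)]

namespace NonrepAux

variable {C : Type} [DecidableEq C]

/-- inversion count: pairs (false, ..., true). -/
def inv : List (Bool × C) → ℕ
  | [] => 0
  | e :: t => inv t + (if e.1 = false then t.countP (fun x => x.1) else 0)

lemma inv_append (l1 b : List (Bool × C)) :
    inv (l1 ++ b) = inv l1 + inv b +
      (b.countP (fun x => x.1)) * (l1.countP (fun x => !x.1)) := by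
  induction l1 with
  | nil => simp [inv]
  | cons e t ih =>
    rcases e with ⟨b', c⟩
    cases b' <;> simp [inv, ih, List.countP_append, List.countP_cons] <;> ring

lemma inv_switch {w w' : List (Bool × C)} (h : SwitchStep w w') :
    inv w = inv w' + 1 := by
  obtain ⟨l1, l2, σ, τ, hne, rfl, rfl⟩ := h
  simp [inv_append, inv, List.countP_cons]
  ring

lemma exists_pair : ∀ w : List (Bool × C), inv w ≠ 0 →
    ∃ l1 τ σ l2, w = l1 ++ (false, τ) :: (true, σ) :: l2 := by
  intro w
  induction w with
  | nil => simp [inv]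
  | cons e t ih =>
    rcases e with ⟨b, c⟩
    cases b with
    | true =>
      intro hw
      have ht : inv t ≠ 0 := by simpa [inv] using hw
      obtain ⟨l1, τ, σ, l2, rfl⟩ := ih ht
      exact ⟨(true, c) :: l1, τ, σ, l2, rfl⟩
    | false =>
      intro hw
      match t, ih with
      | [], _ => simp [inv] at hw
      | (true, c') :: t', _ => exact ⟨[], c, c', t', rfl⟩
      | (false, c') :: t', ih =>
        have ht : inv ((false, c') :: t') ≠ 0 := by
          simp [inv, List.countP_cons] at hw ⊢
          exact hw
        obtain ⟨l1, τ, σ, l2, he⟩ := ih ht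
        exact ⟨(false, c) :: l1, τ, σ, l2, by rw [he]; rfl⟩

lemma sorted_of_inv_zero : ∀ w : List (Bool × C), inv w = 0 →
    ∃ w1 w2, w = w1 ++ w2 ∧ (∀ e ∈ w1, e.1 = true) ∧ (∀ e ∈ w2, e.1 = false) := by
  intro w
  induction w with
  | nil => exact fun _ => ⟨[], [], by simp, by simp, by simp⟩
  | cons e t ih =>
    rcases e with ⟨b, c⟩
    cases b with
    | true =>
      intro hw
      have ht : inv t = 0 := by simpa [inv] using hw
      obtain ⟨w1, w2, rfl, h1, h2⟩ := ih ht
      exact ⟨(true, c) :: w1, w2, rfl, by simpa using h1, h2⟩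
    | false =>
      intro hw
      simp [inv] at hw
      refine ⟨[], (false, c) :: t, by simp, by simp, ?_⟩
      intro e he
      rcases List.mem_cons.mp he with rfl | he
      · rfl
      · rcases e with ⟨b, c'⟩
        cases b with
        | true => exact absurd he (hw.2 c')
        | false => rfl

lemma switch_perm {w w' : List (Bool × C)} (h : SwitchStep w w') : w.Perm w' := by
  obtain ⟨l1, l2, σ, τ, hne, rfl, rfl⟩ := h
  exact List.Perm.append_left l1 (List.Perm.swap _ _ _)

lemma chain_perm {w w' : List (Bool × C)} (h : Relation.ReflTransGen SwitchStep w w') :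
    w.Perm w' := by
  induction h with
  | refl => exact List.Perm.refl _
  | tail _ hstep ih => exact ih.trans (switch_perm hstep)

lemma pair_ne {w : List (Bool × C)} (h : ValidNonRep w)
    (l1 l2 : List (Bool × C)) (σ τ : C)
    (hw : w = l1 ++ (false, τ) :: (true, σ) :: l2) : σ ≠ τ := by
  rintro rfl
  subst hw
  rcases h σ with h' | h' <;>
    simp [List.filter_append] at h'
  rcases hl : l1.filter (fun e => decide (e.2 = σ)) with _ | ⟨a, as⟩
  · rw [hl] at h'; simp at h'
  · rw [hl] at h'
    apply congrArg List.length at h'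
    simp at h'
    omega

lemma valid_preserved {w w' : List (Bool × C)} (hs : SwitchStep w w')
    (h : ValidNonRep w) : ValidNonRep w' := by
  obtain ⟨l1, l2, σ, τ, hne, rfl, rfl⟩ := hs
  intro ρ
  have hfe : (l1 ++ (true, σ) :: (false, τ) :: l2).filter (fun e => decide (e.2 = ρ)) =
      (l1 ++ (false, τ) :: (true, σ) :: l2).filter (fun e => decide (e.2 = ρ)) := by
    by_cases hσ : σ = ρ <;> by_cases hτ : τ = ρ <;>
      simp [List.filter_append, List.filter_cons, hσ, hτ]
    exact absurd (hσ.trans hτ.symm) hne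
  rw [hfe]
  exact h ρ

lemma aux : ∀ n : ℕ, ∀ w : List (Bool × C), ValidNonRep w → inv w ≤ n →
    ∃ w', Relation.ReflTransGen SwitchStep w w' ∧
      ∃ w1 w2, w' = w1 ++ w2 ∧ (∀ e ∈ w1, e.1 = true) ∧ (∀ e ∈ w2, e.1 = false) := by
  intro n
  induction n with
  | zero =>
    intro w _ hle
    obtain ⟨w1, w2, hw, h1, h2⟩ := sorted_of_inv_zero w (Nat.le_zero.mp hle)
    exact ⟨w, Relation.ReflTransGen.refl, w1, w2, hw, h1, h2⟩
  | succ n ih =>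
    intro w hv hle
    by_cases h0 : inv w = 0
    · obtain ⟨w1, w2, hw, h1, h2⟩ := sorted_of_inv_zero w h0
      exact ⟨w, Relation.ReflTransGen.refl, w1, w2, hw, h1, h2⟩
    · obtain ⟨l1, τ, σ, l2, rfl⟩ := exists_pair w h0
      have hne : σ ≠ τ := pair_ne hv l1 l2 σ τ rfl
      set w2' := l1 ++ (true, σ) :: (false, τ) :: l2 with hw2'
      have hs : SwitchStep (l1 ++ (false, τ) :: (true, σ) :: l2) w2' :=
        ⟨l1, l2, σ, τ, hne, rfl, rfl⟩
      have hv' : ValidNonRep w2' := valid_preserved hs hv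
      have hinv : inv w2' ≤ n := by
        have := inv_switch hs
        omega
      obtain ⟨w', hchain, rest⟩ := ih w2' hv' hinv
      exact ⟨w', Relation.ReflTransGen.head hs hchain, rest⟩

lemma count_true_false {w : List (Bool × C)} (h : ValidNonRep w) (σ : C) :
    w.count (true, σ) = w.count (false, σ) := by
  have h1 : w.count (true, σ) =
      (w.filter (fun e => decide (e.2 = σ))).count (true, σ) :=
    (List.count_filter (by simp)).symm
  have h2 : w.count (false, σ) =
      (w.filter (fun e => decide (e.2 = σ))).count (false, σ) :=
    (List.count_filter (by simp)).symm
  rcases h σ with hf | hf <;> rw [h1, h2, hf] <;> simp [List.count_cons]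

lemma count_snd_map (b : Bool) (σ : C) (w : List (Bool × C)) :
    ((w.filter (fun e => e.1 == b)).map Prod.snd).count σ = w.count (b, σ) := by
  induction w with
  | nil => simp
  | cons e t ih =>
    rcases e with ⟨b', c⟩
    by_cases hb : b' = b <;> by_cases hc : c = σ <;>
      simp [List.filter_cons, List.count_cons, hb, hc, ih, Prod.ext_iff]

lemma countP_true_eq_false {w : List (Bool × C)} (h : ValidNonRep w) :
    w.countP (fun e => e.1) = w.countP (fun e => !e.1) := by
  have hperm : ((w.filter (fun e => e.1 == true)).map Prod.snd).Perm
      ((w.filter (fun e => e.1 == false)).map Prod.snd) :=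
    List.perm_iff_count.mpr fun σ => by
      rw [count_snd_map, count_snd_map, count_true_false h]
  have hlen := hperm.length_eq
  simpa [List.countP_eq_length_filter] using hlen

end NonrepAux

theorem nonrep_to_updown {C : Type} [DecidableEq C] (w : List (Bool × C))
    (h : ValidNonRep w) :
    ∃ w' w1 w2 : List (Bool × C),
      Relation.ReflTransGen SwitchStep w w' ∧
      w' = w1 ++ w2 ∧ (∀ e ∈ w1, e.1 = true) ∧ (∀ e ∈ w2, e.1 = false) ∧
      w1.length = w2.length ∧ w.length = w1.length + w2.length := by
  obtain ⟨w', hchain, w1, w2, hw', h1, h2⟩ :=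
    NonrepAux.aux (NonrepAux.inv w) w h le_rfl
  have hperm := NonrepAux.chain_perm hchain
  have hcount := NonrepAux.countP_true_eq_false h
  have hc1 : w1.countP (fun e => e.1) = w1.length :=
    List.countP_eq_length.mpr fun e he => by simp [h1 e he]
  have hc2 : w2.countP (fun e => e.1) = 0 :=
    List.countP_eq_zero.mpr fun e he => by simp [h2 e he]
  have hd1 : w1.countP (fun e => !e.1) = 0 :=
    List.countP_eq_zero.mpr fun e he => by simp [h1 e he]
  have hd2 : w2.countP (fun e => !e.1) = w2.length :=
    List.countP_eq_length.mpr fun e he => by simp [h2 e he]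
  have hpt := hperm.countP_eq (fun e => e.1)
  have hpf := hperm.countP_eq (fun e => !e.1)
  rw [hw', List.countP_append, hc1, hc2] at hpt
  rw [hw', List.countP_append, hd1, hd2] at hpf
  have hlen : w.length = w1.length + w2.length := by
    have := hperm.length_eq
    rw [hw', List.length_append] at this
    exact this
  exact ⟨w', w1, w2, hchain, hw', h1, h2, by omega, hlen⟩
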